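/- arXiv:2211.04680 — 3 statements merged into one kernel-verified Lean document; each statement's English description precedes it below -/
import Mathlib

section
/- Let (X, τ) be a topological space and let *O(X) denote the topology on X generated by the *-open sets. Then (X, τ) is connected if and only if (X, *O(X)) is connected. -/
open Set TopologicalSpace

def RegOpen (X : Type*) [TopologicalSpace X] (U : Set X) : Prop :=
  interior (closure U) = U

def starInt (X : Type*) [TopologicalSpace X] (A : Set X) : Set X :=
  {x | x ∈ A ∧ ∃ W, RegOpen X W ∧ x ∈ W ∧ W ⊆ A}

def starCl (X : Type*) [TopologicalSpace X] (A : Set X) : Set X :=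
  {x | ∀ W, RegOpen X W → x ∈ W → (W ∩ A).Nonempty}

def StarOpen (X : Type*) [TopologicalSpace X] (A : Set X) : Prop :=
  ∀ x ∈ A, ∃ W, RegOpen X W ∧ x ∈ W ∧ W ⊆ A

def starTop (X : Type*) [TopologicalSpace X] : TopologicalSpace X :=
  TopologicalSpace.generateFrom {A | StarOpen X A}

def StarContinuous {X Y : Type*} [TopologicalSpace X] [TopologicalSpace Y] (f : X → Y) : Prop :=
  ∀ A : Set Y, StarOpen Y A → StarOpen X (f ⁻¹' A)

lemma StarOpen.isOpen {X : Type*} [TopologicalSpace X] {A : Set X} (h : StarOpen X A) :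
    IsOpen A := by
  rw [isOpen_iff_forall_mem_open]
  intro x hx
  obtain ⟨W, hW, hxW, hWA⟩ := h x hx
  exact ⟨W, hWA, hW ▸ isOpen_interior, hxW⟩

lemma le_starTop {X : Type*} [t : TopologicalSpace X] : t ≤ starTop X :=
  le_generateFrom fun _ h => h.isOpen

lemma IsClopen.starOpen {X : Type*} [TopologicalSpace X] {A : Set X} (h : IsClopen A) :
    StarOpen X A := fun x hx =>
  ⟨A, by rw [RegOpen, h.isClosed.closure_eq, h.isOpen.interior_eq], hx, subset_rfl⟩

theorem stmt13 {X : Type*} [TopologicalSpace X] :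
    ConnectedSpace X ↔ @ConnectedSpace X (starTop X) := by
  constructor
  · intro h
    haveI : Nonempty X := h.toNonempty
    have pre : @IsPreconnected X (starTop X) univ := by
      intro u v hu hv huv hu' hv'
      exact h.toPreconnectedSpace.isPreconnected_univ u v (le_starTop _ hu) (le_starTop _ hv)
        huv hu' hv'
    exact @ConnectedSpace.mk X (starTop X) (@PreconnectedSpace.mk X (starTop X) pre) ‹_›
  · intro h
    haveI : Nonempty X := h.toNonempty
    have pre : IsPreconnected (univ : Set X) := by
      intro u v hu hv huv hu' hv'
      by_contra hne
      rw [not_nonempty_iff_eq_empty] at hne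
      have hdisj : u ∩ v = ∅ := by rwa [univ_inter] at hne
      have huniv : u ∪ v = univ := univ_subset_iff.mp huv
      have hvc : v = uᶜ := by
        apply Subset.antisymm
        · intro x hx hxu
          have hmem : x ∈ u ∩ v := ⟨hxu, hx⟩
          rw [hdisj] at hmem
          exact hmem
        · intro x hx
          rcases (huniv ▸ mem_univ x : x ∈ u ∪ v) with h' | h'
          · exact absurd h' hx
          · exact h'
      have hucl : IsClopen u := ⟨by rw [← compl_compl u, ← hvc]; exact hv.isClosed_compl, hu⟩
      have hu_star : (starTop X).IsOpen u :=
        TopologicalSpace.GenerateOpen.basic u hucl.starOpen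
      have hv_star : (starTop X).IsOpen v :=
        TopologicalSpace.GenerateOpen.basic v (hvc ▸ hucl.compl.starOpen)
      have := h.toPreconnectedSpace.isPreconnected_univ u v hu_star hv_star huv hu' hv'
      rw [hne] at this
      exact this.ne_empty rfl
    exact @ConnectedSpace.mk X _ ⟨pre⟩ ‹_›
end

section
/- If (X, τ) is a Hausdorff locally compact topological space, then X equipped with the topology *O(X) of *-open sets is locally compact. -/
open Set TopologicalSpace

lemma regOpen_intCl {X : Type*} [TopologicalSpace X] (V : Set X) (hV : IsOpen V) :
    RegOpen X (interior (closure V)) := by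
  unfold RegOpen
  apply le_antisymm
  · exact interior_mono (closure_mono interior_subset |>.trans closure_closure.le)
  · refine interior_mono ?_
    exact closure_mono (hV.subset_interior_iff.mpr subset_closure)

lemma starTop_eq {X : Type*} [TopologicalSpace X] [T2Space X] (h : LocallyCompactSpace X) :
    starTop X = ‹TopologicalSpace X› := by
  unfold starTop
  have : {A : Set X | StarOpen X A} = {A | IsOpen A} := by
    ext A
    constructor
    · intro hA
      rw [mem_setOf_eq] at hA ⊢
      rw [isOpen_iff_forall_mem_open]
      intro x hx
      obtain ⟨W, hW, hxW, hWA⟩ := hA x hx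
      exact ⟨W, hWA, hW ▸ isOpen_interior, hxW⟩
    · intro hA x hx
      obtain ⟨K, hKmem, hKA, hKcomp⟩ := h.local_compact_nhds x A (hA.mem_nhds hx)
      refine ⟨interior (closure (interior K)), regOpen_intCl _ isOpen_interior, ?_, ?_⟩
      · exact isOpen_interior.subset_interior_iff.mpr subset_closure
          (mem_interior_iff_mem_nhds.mpr hKmem)
      · calc interior (closure (interior K)) ⊆ closure (interior K) := interior_subset
          _ ⊆ closure K := closure_mono interior_subset
          _ = K := hKcomp.isClosed.closure_eq
          _ ⊆ A := hKA
  rw [this, generateFrom_setOf_isOpen]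

theorem stmt15 {X : Type*} [TopologicalSpace X] [T2Space X] (h : LocallyCompactSpace X) :
    @LocallyCompactSpace X (starTop X) := by
  rw [starTop_eq h]; exact h
end

section
/- If f : X → Y is a surjective *-continuous map and X is connected, then Y is connected. -/
open Set TopologicalSpace

theorem stmt18 {X Y : Type*} [TopologicalSpace X] [TopologicalSpace Y]
    (f : X → Y) (hf : Function.Surjective f) (hc : StarContinuous f)
    (hX : ConnectedSpace X) : ConnectedSpace Y := by
  have hYne : Nonempty Y := ⟨f (Classical.arbitrary X)⟩
  have starOpen_isOpen : ∀ (A : Set X), StarOpen X A → IsOpen A := by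
    intro A hA
    rw [isOpen_iff_forall_mem_open]
    intro x hx
    obtain ⟨W, hW, hxW, hWA⟩ := hA x hx
    exact ⟨W, hWA, by rw [← hW]; exact isOpen_interior, hxW⟩
  have clopen_star : ∀ (U : Set Y), IsClopen U → StarOpen Y U := by
    intro U hU y hy
    refine ⟨U, ?_, hy, subset_rfl⟩
    unfold RegOpen
    rw [hU.isClosed.closure_eq, hU.isOpen.interior_eq]
  have : PreconnectedSpace Y := by
    rw [preconnectedSpace_iff_univ]
    by_contra h
    rw [IsPreconnected] at h
    push_neg at h
    obtain ⟨u, v, hu, hv, huv, ⟨a, -, ha⟩, ⟨b, -, hb⟩, hdisj⟩ := h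
    have hvc : v = uᶜ := by
      apply subset_antisymm
      · intro y hy hyu
        exact (Set.eq_empty_iff_forall_notMem.mp hdisj y ⟨trivial, hyu, hy⟩)
      · intro y hy
        rcases huv (mem_univ y) with h' | h'
        · exact absurd h' hy
        · exact h'
    have hclopen : IsClopen u := ⟨by rw [← isOpen_compl_iff, ← hvc]; exact hv, hu⟩
    have h1 : IsOpen (f ⁻¹' u) := starOpen_isOpen _ (hc u (clopen_star u hclopen))
    have h2 : IsOpen (f ⁻¹' uᶜ) := starOpen_isOpen _ (hc uᶜ (clopen_star uᶜ hclopen.compl))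
    have hpc := hX.isPreconnected_univ
    obtain ⟨a', ha'⟩ := hf a
    obtain ⟨b', hb'⟩ := hf b
    obtain ⟨x, -, hx1, hx2⟩ := hpc (f ⁻¹' u) (f ⁻¹' uᶜ)
      (h1) (h2) (fun x _ => by by_cases hxu : f x ∈ u; exacts [Or.inl hxu, Or.inr hxu])
      ⟨a', trivial, by simpa [ha']⟩ ⟨b', trivial, by simp [hb', ← hvc]; exact hb⟩
    exact hx2 hx1
  exact { toPreconnectedSpace := this, toNonempty := hYne }
end
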